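/- Let $c \in (0, 2\pi]$, $\alpha \in (0,1)$. There exists a constant $A > 0$ such that for all sufficiently small $\epsilon > 0$ the following holds: if $T_0, T_1, \ldots, T_N$ (with $N = \lfloor c/\epsilon^\alpha \rfloor$) are $1 \times \epsilon$ rectangles in $\mathbb{R}^2$ such that the long side of $T_i$ has directional angle $i \epsilon^\alpha$, then the Lebesgue measure of $\bigcup_i T_i$ is at least $A \epsilon^{1-\alpha}$. -/

import Mathlib

open Real MeasureTheory

/-- A closed `1 × ε` rectangle (tube) in `ℝ²` whose long side has directional
angle `θ`, with corner at `p`. -/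
def tube (θ ε : ℝ) (p : ℝ × ℝ) : Set (ℝ × ℝ) :=
  {x | ∃ s ∈ Set.Icc (0 : ℝ) 1, ∃ t ∈ Set.Icc (0 : ℝ) ε,
    x = p + s • (Real.cos θ, Real.sin θ) + t • (-Real.sin θ, Real.cos θ)}

noncomputable def lmapAux (a b c d : ℝ) : (ℝ×ℝ) →ₗ[ℝ] (ℝ×ℝ) :=
  LinearMap.prod (a • LinearMap.fst ℝ ℝ ℝ + b • LinearMap.snd ℝ ℝ ℝ)
                 (c • LinearMap.fst ℝ ℝ ℝ + d • LinearMap.snd ℝ ℝ ℝ)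

lemma lmapAux_apply (a b c d : ℝ) (x : ℝ × ℝ) :
    lmapAux a b c d x = (a*x.1 + b*x.2, c*x.1 + d*x.2) := by
  simp [lmapAux, mul_comm]

lemma lmapAux_det (a b c d : ℝ) : LinearMap.det (lmapAux a b c d) = a*d - b*c := by
  rw [← LinearMap.det_toMatrix (Module.Basis.finTwoProd ℝ), Matrix.det_fin_two]
  simp [LinearMap.toMatrix_apply, lmapAux, Module.Basis.finTwoProd_zero, Module.Basis.finTwoProd_one,
    Module.Basis.coe_finTwoProd_repr]

lemma tube_eq (θ ε : ℝ) (p : ℝ × ℝ) :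
    tube θ ε p =
      (fun x => p + x) '' (lmapAux (cos θ) (-sin θ) (sin θ) (cos θ) ''
        (Set.Icc (0:ℝ) 1 ×ˢ Set.Icc (0:ℝ) ε)) := by
  ext x
  constructor
  · rintro ⟨s, hs, t, ht, rfl⟩
    refine ⟨lmapAux (cos θ) (-sin θ) (sin θ) (cos θ) (s, t),
      Set.mem_image_of_mem _ (Set.mk_mem_prod hs ht), ?_⟩
    rw [lmapAux_apply]
    apply Prod.ext <;> simp <;> ring
  · rintro ⟨y, ⟨⟨s, t⟩, hst, rfl⟩, rfl⟩
    obtain ⟨hs, ht⟩ := hst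
    refine ⟨s, hs, t, ht, ?_⟩
    rw [lmapAux_apply]
    apply Prod.ext <;> simp <;> ring

lemma volume_tube (θ ε : ℝ) (p : ℝ × ℝ) : volume (tube θ ε p) = ENNReal.ofReal ε := by
  rw [tube_eq, Set.image_add_left, measure_preimage_add,
    Measure.addHaar_image_linearMap, lmapAux_det,
    show (volume : Measure (ℝ×ℝ)) = (volume : Measure ℝ).prod volume from rfl,
    Measure.prod_prod, Real.volume_Icc, Real.volume_Icc]
  have : cos θ * cos θ - -sin θ * sin θ = 1 := by
    have := sin_sq_add_cos_sq θ; nlinarith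
  rw [this]
  simp

lemma tube_compact (θ ε : ℝ) (p : ℝ × ℝ) : IsCompact (tube θ ε p) := by
  rw [tube_eq]
  exact (((isCompact_Icc.prod isCompact_Icc).image
    (lmapAux (cos θ) (-sin θ) (sin θ) (cos θ)).continuous_of_finiteDimensional).image
    (continuous_const.add continuous_id))

lemma tube_measurable (θ ε : ℝ) (p : ℝ × ℝ) : MeasurableSet (tube θ ε p) :=
  (tube_compact θ ε p).isClosed.measurableSet

lemma tube_strip {θ ε : ℝ} {p x : ℝ × ℝ} (hx : x ∈ tube θ ε p) :
    (-sin θ) * x.1 + cos θ * x.2 ∈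
      Set.Icc ((-sin θ) * p.1 + cos θ * p.2) ((-sin θ) * p.1 + cos θ * p.2 + ε) := by
  obtain ⟨s, hs, t, ht, rfl⟩ := hx
  have h1 := sin_sq_add_cos_sq θ
  simp only [Prod.fst_add, Prod.snd_add, Prod.smul_mk, smul_eq_mul]
  constructor <;> nlinarith [ht.1, ht.2]

lemma volume_tube_inter {θ₁ θ₂ ε : ℝ} (hε : 0 ≤ ε) (h : sin (θ₂ - θ₁) ≠ 0) (p q : ℝ × ℝ) :
    volume (tube θ₁ ε p ∩ tube θ₂ ε q) ≤ ENNReal.ofReal (ε^2 / |sin (θ₂ - θ₁)|) := by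
  set f := lmapAux (-sin θ₁) (cos θ₁) (-sin θ₂) (cos θ₂) with hf
  set a := (-sin θ₁) * p.1 + cos θ₁ * p.2
  set b := (-sin θ₂) * q.1 + cos θ₂ * q.2
  have hsub : tube θ₁ ε p ∩ tube θ₂ ε q ⊆
      f ⁻¹' ((Set.Icc a (a+ε)) ×ˢ (Set.Icc b (b+ε))) := by
    rintro x ⟨hx1, hx2⟩
    have h1 := tube_strip hx1
    have h2 := tube_strip hx2
    simp only [Set.mem_preimage, hf, lmapAux_apply, Set.mem_prod]
    exact ⟨h1, h2⟩
  have hdet : LinearMap.det f = sin (θ₂ - θ₁) := by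
    rw [hf, lmapAux_det, Real.sin_sub]; ring
  calc volume (tube θ₁ ε p ∩ tube θ₂ ε q)
      ≤ volume (f ⁻¹' ((Set.Icc a (a+ε)) ×ˢ (Set.Icc b (b+ε)))) := measure_mono hsub
    _ = ENNReal.ofReal |(LinearMap.det f)⁻¹| *
        volume ((Set.Icc a (a+ε)) ×ˢ (Set.Icc b (b+ε))) := by
        rw [Measure.addHaar_preimage_linearMap volume (by rw [hdet]; exact h)]
    _ ≤ ENNReal.ofReal (ε^2 / |sin (θ₂ - θ₁)|) := by
        have hvol : volume ((Set.Icc a (a+ε)) ×ˢ (Set.Icc b (b+ε)))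
            = ENNReal.ofReal ε * ENNReal.ofReal ε := by
          rw [show (volume : Measure (ℝ×ℝ)) = (volume : Measure ℝ).prod volume from rfl,
            Measure.prod_prod, Real.volume_Icc, Real.volume_Icc]
          norm_num
        rw [hvol, hdet, ← ENNReal.ofReal_mul (by positivity), ← ENNReal.ofReal_mul (by positivity)]
        apply ENNReal.ofReal_le_ofReal
        rw [abs_inv, div_eq_mul_inv]
        ring_nf
        exact le_refl _

lemma sum_le_union {T : ℕ → Set (ℝ×ℝ)} (hT : ∀ i, MeasurableSet (T i)) (n : ℕ) :
    ∑ i ∈ Finset.range n, volume (T i) ≤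
      volume (⋃ i ∈ Finset.range n, T i) +
      ∑ i ∈ Finset.range n, ∑ j ∈ Finset.range i, volume (T i ∩ T j) := by
  induction n with
  | zero => simp
  | succ n ih =>
    have key : volume (⋃ i ∈ Finset.range n, T i) + volume (T n) =
        volume (⋃ i ∈ Finset.range (n+1), T i) + volume ((⋃ i ∈ Finset.range n, T i) ∩ T n) := by
      rw [show (⋃ i ∈ Finset.range (n+1), T i) = T n ∪ (⋃ i ∈ Finset.range n, T i) by
        rw [Finset.range_add_one]; simp [Set.biUnion_insert], Set.union_comm]
      exact (measure_union_add_inter _ (hT n)).symm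
    have hcap : volume ((⋃ i ∈ Finset.range n, T i) ∩ T n) ≤
        ∑ j ∈ Finset.range n, volume (T n ∩ T j) := by
      rw [Set.iUnion₂_inter]
      refine (measure_biUnion_finset_le _ _).trans ?_
      exact Finset.sum_le_sum fun j _ => measure_mono (by rw [Set.inter_comm])
    rw [Finset.sum_range_succ,
      Finset.sum_range_succ (f := fun i => ∑ j ∈ Finset.range i, volume (T i ∩ T j))]
    calc ∑ i ∈ Finset.range n, volume (T i) + volume (T n)
        ≤ (volume (⋃ i ∈ Finset.range n, T i) +
            ∑ i ∈ Finset.range n, ∑ j ∈ Finset.range i, volume (T i ∩ T j)) + volume (T n) :=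
          add_le_add_left ih _
      _ = (volume (⋃ i ∈ Finset.range n, T i) + volume (T n)) +
            ∑ i ∈ Finset.range n, ∑ j ∈ Finset.range i, volume (T i ∩ T j) := by ring
      _ = (volume (⋃ i ∈ Finset.range (n+1), T i) + volume ((⋃ i ∈ Finset.range n, T i) ∩ T n)) +
            ∑ i ∈ Finset.range n, ∑ j ∈ Finset.range i, volume (T i ∩ T j) := by rw [key]
      _ ≤ _ := by
          rw [add_assoc]
          refine add_le_add_right ?_ _
          rw [add_comm (∑ x ∈ Finset.range n, ∑ j ∈ Finset.range x, volume (T x ∩ T j))]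
          exact add_le_add_left hcap _

set_option maxHeartbeats 1000000 in
theorem stmt_2 (c α : ℝ) (hc : c ∈ Set.Ioc 0 (2 * π)) (hα : α ∈ Set.Ioo (0 : ℝ) 1) :
    ∃ A > (0 : ℝ), ∃ ε₀ > (0 : ℝ), ∀ ε : ℝ, 0 < ε → ε < ε₀ →
      ∀ p : ℕ → ℝ × ℝ,
        ENNReal.ofReal (A * ε ^ (1 - α)) ≤
          volume (⋃ i ∈ Finset.range (⌊c / ε ^ α⌋₊ + 1), tube (i * ε ^ α) ε (p i)) := by
  obtain ⟨hc0, hcle⟩ := hc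
  obtain ⟨hα0, hα1⟩ := hα
  have hπ : (0:ℝ) < π := pi_pos
  set c' := min c (π/2) with hc'
  have hc'0 : 0 < c' := lt_min hc0 (by positivity)
  have hc'c : c' ≤ c := min_le_left _ _
  have hc'π : c' ≤ π/2 := min_le_right _ _
  -- choice of ε₀ via limits
  have h1 : ∀ᶠ ε in nhdsWithin (0:ℝ) (Set.Ioi 0), ε < 1 := by
    apply eventually_nhdsWithin_of_eventually_nhds
    exact Filter.Tendsto.eventually_lt_const (by norm_num) Filter.tendsto_id
  have hrpow : ∀ r : ℝ, 0 < r →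
      Filter.Tendsto (fun ε : ℝ => ε ^ r) (nhdsWithin 0 (Set.Ioi 0)) (nhds 0) := by
    intro r hr
    have := (Real.continuousAt_rpow_const 0 r (Or.inr hr.le)).tendsto
    rw [Real.zero_rpow hr.ne'] at this
    exact this.mono_left nhdsWithin_le_nhds
  have h2 : ∀ᶠ ε in nhdsWithin (0:ℝ) (Set.Ioi 0), ε ^ α < c' :=
    (hrpow α hα0).eventually_lt_const hc'0
  have h3 : ∀ᶠ ε in nhdsWithin (0:ℝ) (Set.Ioi 0), π * ε^(1-α) * (2 - log ε) < 1 := by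
    have t1 := (hrpow (1-α) (by linarith)).const_mul (π*2)
    have t2 := (tendsto_log_mul_rpow_nhdsGT_zero (r := 1-α) (by linarith)).const_mul π
    have t3 := t1.sub t2
    rw [mul_zero, mul_zero, sub_zero] at t3
    have heq : (fun ε : ℝ => π * ε^(1-α) * (2 - log ε)) =
        fun ε : ℝ => π*2 * ε^(1-α) - π * (log ε * ε^(1-α)) := by
      funext ε; ring
    rw [← heq] at t3
    exact t3.eventually_lt_const (by norm_num)
  have hev := (h1.and (h2.and h3))
  rw [Filter.eventually_iff, mem_nhdsGT_iff_exists_Ioo_subset] at hev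
  obtain ⟨ε₀, hε₀pos, hsub⟩ := hev
  refine ⟨c'/2, by positivity, ε₀, hε₀pos, ?_⟩
  intro ε hε0 hεlt p
  obtain ⟨hε1, hεα, hεlog⟩ := hsub ⟨hε0, hεlt⟩
  -- setup
  set δ := ε ^ α with hδdef
  have hδ0 : 0 < δ := Real.rpow_pos_of_pos hε0 α
  set x := ε ^ (1-α) with hxdef
  have hx0 : 0 < x := Real.rpow_pos_of_pos hε0 _
  have hx : x = ε / δ := by
    rw [hxdef, hδdef, Real.rpow_sub hε0, Real.rpow_one]
  set M := ⌊c'/δ⌋₊ with hM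
  set N := ⌊c/δ⌋₊ with hN
  have hMN : M ≤ N := Nat.floor_mono (by gcongr)
  have hM1 : 1 ≤ M := Nat.le_floor (by
    rw [Nat.cast_one, le_div_iff₀ hδ0, one_mul]; exact hεα.le)
  have hMle : (M:ℝ) ≤ c'/δ := Nat.floor_le (by positivity)
  have hMδ : (M:ℝ) * δ ≤ c' := by rwa [← le_div_iff₀ hδ0]
  have hMlt : c'/δ < (M:ℝ) + 1 := by
    have := Nat.lt_floor_add_one (c'/δ); exact_mod_cast this
  set T := fun i : ℕ => tube (i * δ) ε (p i) with hT
  -- reduce to union over range (M+1)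
  have hUmono : volume (⋃ i ∈ Finset.range (M+1), T i) ≤
      volume (⋃ i ∈ Finset.range (N+1), T i) := by
    apply measure_mono
    apply Set.iUnion₂_subset
    intro i hi
    exact Set.subset_biUnion_of_mem (Finset.mem_range.mpr
      (by have := Finset.mem_range.mp hi; omega))
  -- inclusion-exclusion
  have hIE := sum_le_union (T := T) (fun i => tube_measurable _ _ _) (M+1)
  have hsum : ∑ i ∈ Finset.range (M+1), volume (T i)
      = (M+1 : ℕ) * ENNReal.ofReal ε := by
    simp [hT, volume_tube, Finset.sum_const]
  -- pairwise intersection bound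
  have hpair : ∀ i ∈ Finset.range (M+1), ∀ j ∈ Finset.range i,
      volume (T i ∩ T j) ≤ ENNReal.ofReal ((π/2) * (ε^2/δ) * (1/((i:ℝ)-j))) := by
    intro i hi j hj
    have hiM : i ≤ M := by have := Finset.mem_range.mp hi; omega
    have hji : j < i := Finset.mem_range.mp hj
    have hcast : (i:ℝ) - j = ((i - j : ℕ) : ℝ) := by
      push_cast [Nat.cast_sub hji.le]; ring
    have hk1 : (1:ℝ) ≤ ((i - j : ℕ) : ℝ) := by
      have : 1 ≤ i - j := by omega
      exact_mod_cast this
    have hφpos : 0 < ((i - j : ℕ) : ℝ) * δ := by positivity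
    have hφle : ((i - j : ℕ) : ℝ) * δ ≤ π/2 := by
      have hkM : ((i - j : ℕ) : ℝ) ≤ M := by
        have : i - j ≤ M := by omega
        exact_mod_cast this
      calc ((i - j : ℕ) : ℝ) * δ ≤ M * δ := by gcongr
        _ ≤ c' := hMδ
        _ ≤ π/2 := hc'π
    have hdiff : (i:ℝ) * δ - (j:ℝ) * δ = ((i - j : ℕ) : ℝ) * δ := by
      rw [← hcast]; ring
    have hsin : 2/π * (((i - j : ℕ) : ℝ) * δ) ≤ sin (((i - j : ℕ) : ℝ) * δ) :=
      Real.mul_le_sin hφpos.le hφle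
    have hsinpos : 0 < sin (((i - j : ℕ) : ℝ) * δ) := by
      have : 0 < 2/π * (((i - j : ℕ) : ℝ) * δ) := by positivity
      linarith
    have hbound := volume_tube_inter (θ₁ := (j:ℝ) * δ) (θ₂ := (i:ℝ) * δ) hε0.le
      (by rw [hdiff]; exact hsinpos.ne') (p j) (p i)
    rw [Set.inter_comm] at hbound
    refine hbound.trans (ENNReal.ofReal_le_ofReal ?_)
    rw [hdiff, abs_of_pos hsinpos]
    have h2π : 0 < 2/π * (((i - j : ℕ) : ℝ) * δ) := by positivity
    calc ε^2 / sin (((i - j : ℕ) : ℝ) * δ)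
        ≤ ε^2 / (2/π * (((i - j : ℕ) : ℝ) * δ)) := by
          apply div_le_div_of_nonneg_left (by positivity) h2π hsin
      _ = (π/2) * (ε^2/δ) * (1/((i:ℝ)-j)) := by
          rw [hcast]; field_simp
  -- bound the double sum
  have hharm : ∀ i ∈ Finset.range (M+1),
      ∑ j ∈ Finset.range i, (π/2) * (ε^2/δ) * (1/((i:ℝ)-j))
        ≤ (π/2) * (ε^2/δ) * (1 + log M) := by
    intro i hi
    have hiM : i ≤ M := by have := Finset.mem_range.mp hi; omega
    rw [← Finset.mul_sum]
    have hlogM : 0 ≤ log M := Real.log_nonneg (by exact_mod_cast hM1)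
    apply mul_le_mul_of_nonneg_left _ (by positivity)
    have hrefl : ∑ j ∈ Finset.range i, 1/((i:ℝ)-j)
        = ∑ j ∈ Finset.range i, 1/((j:ℝ)+1) := by
      rw [← Finset.sum_range_reflect (fun j => 1/((j:ℝ)+1)) i]
      apply Finset.sum_congr rfl
      intro j hj
      have hj' := Finset.mem_range.mp hj
      congr 1
      push_cast [Nat.cast_sub (show 1 ≤ i by omega), Nat.cast_sub (show j ≤ i - 1 by omega)]
      ring
    rw [hrefl]
    have hharm_eq : ∑ j ∈ Finset.range i, 1/((j:ℝ)+1) = ((harmonic i : ℚ) : ℝ) := by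
      rw [harmonic]; push_cast; simp [one_div]
    rw [hharm_eq]
    refine (harmonic_le_one_add_log i).trans ?_
    rcases Nat.eq_zero_or_pos i with h0 | hpos
    · simp [h0]; exact hlogM
    · have : log i ≤ log M :=
        Real.log_le_log (by exact_mod_cast hpos) (by exact_mod_cast hiM)
      linarith
  have hD : ∑ i ∈ Finset.range (M+1), ∑ j ∈ Finset.range i, volume (T i ∩ T j)
      ≤ ENNReal.ofReal ((M+1 : ℝ) * ((π/2) * (ε^2/δ) * (1 + log M))) := by
    calc ∑ i ∈ Finset.range (M+1), ∑ j ∈ Finset.range i, volume (T i ∩ T j)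
        ≤ ∑ i ∈ Finset.range (M+1), ∑ j ∈ Finset.range i,
            ENNReal.ofReal ((π/2) * (ε^2/δ) * (1/((i:ℝ)-j))) := by
          apply Finset.sum_le_sum; intro i hi
          apply Finset.sum_le_sum; intro j hj
          exact hpair i hi j hj
      _ = ∑ i ∈ Finset.range (M+1), ENNReal.ofReal
            (∑ j ∈ Finset.range i, (π/2) * (ε^2/δ) * (1/((i:ℝ)-j))) := by
          apply Finset.sum_congr rfl; intro i hi
          rw [ENNReal.ofReal_sum_of_nonneg]
          intro j hj
          have hji : j < i := Finset.mem_range.mp hj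
          have : (0:ℝ) < (i:ℝ)-j := by
            have : (j:ℝ) < i := by exact_mod_cast hji
            linarith
          positivity
      _ ≤ ∑ i ∈ Finset.range (M+1), ENNReal.ofReal ((π/2) * (ε^2/δ) * (1 + log M)) := by
          apply Finset.sum_le_sum; intro i hi
          exact ENNReal.ofReal_le_ofReal (hharm i hi)
      _ = ENNReal.ofReal ((M+1 : ℝ) * ((π/2) * (ε^2/δ) * (1 + log M))) := by
          rw [Finset.sum_const, Finset.card_range, nsmul_eq_mul,
            ← ENNReal.ofReal_natCast (M+1), ← ENNReal.ofReal_mul (by positivity)]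
          push_cast
          ring_nf
  -- combine in ENNReal
  set B := (M+1 : ℝ) * ((π/2) * (ε^2/δ) * (1 + log M)) with hBdef
  have hlogM0 : (0:ℝ) ≤ log M := Real.log_nonneg (by exact_mod_cast hM1)
  have hB0 : 0 ≤ B := by
    apply mul_nonneg (by positivity)
    apply mul_nonneg (by positivity)
    linarith
  have hcomb : ENNReal.ofReal ((M+1 : ℝ) * ε) ≤
      volume (⋃ i ∈ Finset.range (M+1), T i) + ENNReal.ofReal B := by
    have hof : ENNReal.ofReal ((M+1 : ℝ) * ε) = (M+1 : ℕ) * ENNReal.ofReal ε := by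
      rw [ENNReal.ofReal_mul (by positivity), ← ENNReal.ofReal_natCast (M+1)]
      push_cast
      ring_nf
    rw [hof, ← hsum]
    exact hIE.trans (add_le_add_right hD _)
  have hkey : ENNReal.ofReal ((M+1 : ℝ) * ε - B) ≤
      volume (⋃ i ∈ Finset.range (M+1), T i) := by
    rw [ENNReal.ofReal_sub _ hB0]
    exact tsub_le_iff_right.mpr hcomb
  -- the real-number estimate
  have hlogε : log ε < 0 := Real.log_neg hε0 hε1
  have hlog2 : 1 + log M ≤ 2 - log ε := by
    have hlogδ : log δ = α * log ε := Real.log_rpow hε0 α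
    have hlogM_le : log M ≤ log (c'/δ) :=
      Real.log_le_log (by exact_mod_cast Nat.lt_of_lt_of_le Nat.zero_lt_one hM1) hMle
    have hdiv : log (c'/δ) = log c' - log δ := Real.log_div hc'0.ne' hδ0.ne'
    have hlogc' : log c' ≤ 1 := by
      have h4 := Real.log_le_sub_one_of_pos hc'0
      nlinarith [pi_le_four]
    nlinarith [hα1.le, hlogε.le]
  have hεx : ε^2/δ = ε * x := by rw [hx]; ring
  have hBle : B ≤ ((M:ℝ)+1) * (ε/2) := by
    have h6 : (π/2) * (ε^2/δ) * (1 + log M) ≤ (π/2) * (ε*x) * (2 - log ε) := by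
      rw [hεx]
      apply mul_le_mul_of_nonneg_left hlog2 (by positivity)
    have h7 : (π/2) * (ε*x) * (2 - log ε) ≤ ε/2 := by
      have h8 : (π/2) * (ε*x) * (2 - log ε) = (ε/2) * (π * x * (2 - log ε)) := by ring
      rw [h8]
      nlinarith [hεlog.le, hε0.le]
    rw [hBdef]
    exact mul_le_mul_of_nonneg_left (h6.trans h7) (by positivity)
  have h5 : c' * x ≤ ((M:ℝ)+1) * ε := by
    rw [hx]
    have h9 : c' * (ε/δ) = (c'/δ) * ε := by ring
    rw [h9]
    exact mul_le_mul_of_nonneg_right hMlt.le hε0.le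
  have hreal : c'/2 * x ≤ ((M:ℝ)+1) * ε - B := by linarith
  refine le_trans (ENNReal.ofReal_le_ofReal ?_) (hkey.trans hUmono)
  show c'/2 * x ≤ ((M:ℝ)+1) * ε - B
  exact hreal
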